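/- Let Γ be a discrete subgroup of a locally compact group G. Then the canonical continuous map π: ΔΓ → ΔG extending the inclusion Γ ↪ G is a topological embedding; equivalently, the restriction map π_*: C_b(G) → ℓ^∞(Γ) is surjective. -/

import Mathlib

open BoundedContinuousFunction Set Topology

/-- For a discrete subgroup `Γ` of a locally compact (Hausdorff) group `G`, the restriction
map `C_b(G) → ℓ^∞(Γ)` is surjective; equivalently, the canonical continuous map
`ΔΓ → ΔG` extending the inclusion is a topological embedding. -/
theorem restriction_Cb_to_linfty_surjective_of_discrete_subgroup
    (G : Type*) [Group G] [TopologicalSpace G] [IsTopologicalGroup G]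
    [LocallyCompactSpace G] [T2Space G]
    (Γ : Subgroup G) [DiscreteTopology ↥Γ] :
    Function.Surjective
      (fun F : G →ᵇ ℝ =>
        F.compContinuous ⟨(Subtype.val : ↥Γ → G), continuous_subtype_val⟩) := by
  intro f
  -- a neighborhood of 1 meeting Γ only at 1
  obtain ⟨V, hV, hVΓ⟩ : ∃ V ∈ 𝓝 (1 : G), V ∩ (Γ : Set G) = {1} :=
    nhds_inter_eq_singleton_of_mem_discrete (isDiscrete_iff_discreteTopology.mpr ‹DiscreteTopology ↥Γ›) Γ.one_mem
  -- shrink twice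
  obtain ⟨W, hWo, hW1, hWV⟩ := exists_open_nhds_one_mul_subset hV
  obtain ⟨U₀, hU₀o, hU₀1, hU₀W⟩ := exists_open_nhds_one_mul_subset (hWo.mem_nhds hW1)
  set U : Set G := U₀ ∩ U₀⁻¹ with hUdef
  have hUo : IsOpen U := hU₀o.inter hU₀o.inv
  have hU1 : (1 : G) ∈ U := ⟨hU₀1, by simpa using hU₀1⟩
  have hUsub : U ⊆ U₀ := inter_subset_left
  have hUinv : ∀ a ∈ U, a⁻¹ ∈ U₀ := fun a ha => ha.2
  have key : ∀ a ∈ U, ∀ b ∈ U, ∀ c ∈ U, ∀ d ∈ U, a * b⁻¹ * c * d⁻¹ ∈ V := by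
    intro a ha b hb c hc d hd
    have h1 : a * b⁻¹ ∈ W := hU₀W (Set.mul_mem_mul (hUsub ha) (hUinv b hb))
    have h2 : c * d⁻¹ ∈ W := hU₀W (Set.mul_mem_mul (hUsub hc) (hUinv d hd))
    have : a * b⁻¹ * (c * d⁻¹) ∈ V := hWV (Set.mul_mem_mul h1 h2)
    simpa [mul_assoc] using this
  -- uniqueness: at most one γ with γ⁻¹ x near g
  have uniq : ∀ (g : G) (γ γ' : Γ) (x y : G), g⁻¹ * x ∈ U → g⁻¹ * y ∈ U →
      (γ : G)⁻¹ * x ∈ U → (γ' : G)⁻¹ * y ∈ U → γ = γ' := by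
    intro g γ γ' x y hx hy hγ hγ'
    have hmem : (γ' : G)⁻¹ * γ ∈ V := by
      have := key _ hγ' _ hy _ hx _ hγ
      have heq : (γ' : G)⁻¹ * y * (g⁻¹ * y)⁻¹ * (g⁻¹ * x) * ((γ : G)⁻¹ * x)⁻¹
          = (γ' : G)⁻¹ * γ := by group
      rwa [heq] at this
    have : ((γ' : G)⁻¹ * γ : G) ∈ V ∩ (Γ : Set G) := ⟨hmem, Γ.mul_mem (Γ.inv_mem γ'.2) γ.2⟩
    rw [hVΓ] at this
    exact (Subtype.ext (inv_mul_eq_one.mp this)).symm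
  -- bump function
  obtain ⟨φ, hφ0, hφ1, hφmem⟩ :=
    exists_continuous_zero_one_of_isCompact' (isCompact_singleton (x := (1 : G)))
      hUo.isClosed_compl (by simpa using hU1)
  -- the extension
  classical
  set F : G → ℝ := fun g =>
    if h : ∃ γ : Γ, (γ : G)⁻¹ * g ∈ U then f h.choose * φ ((h.choose : G)⁻¹ * g) else 0
    with hFdef
  -- value of F where some γ works
  have hFval : ∀ (g : G) (γ : Γ), (γ : G)⁻¹ * g ∈ U → F g = f γ * φ ((γ : G)⁻¹ * g) := by
    intro g γ hγ
    have h : ∃ γ : Γ, (γ : G)⁻¹ * g ∈ U := ⟨γ, hγ⟩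
    have : h.choose = γ := uniq g h.choose γ g g (by simpa using hU1) (by simpa using hU1)
      h.choose_spec hγ
    simp only [hFdef]
    rw [dif_pos h, this]
  -- continuity
  have hφ_nonneg : ∀ x, 0 ≤ φ x := fun x => (hφmem x).1
  have hφ_le : ∀ x, φ x ≤ 1 := fun x => (hφmem x).2
  have hφ_zero : ∀ x, x ∉ U → φ x = 0 := fun x hx => hφ0 hx
  have hFcont : Continuous F := by
    rw [continuous_iff_continuousAt]
    intro g
    have hnhds : {x | g⁻¹ * x ∈ U} ∈ 𝓝 g := by
      have : ContinuousAt (fun x => g⁻¹ * x) g := (continuous_const.mul continuous_id).continuousAt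
      have := this.preimage_mem_nhds (hUo.mem_nhds (by simpa using hU1))
      exact this
    by_cases hex : ∃ (γ : Γ) (x : G), g⁻¹ * x ∈ U ∧ (γ : G)⁻¹ * x ∈ U
    · obtain ⟨γ, x₀, hx₀, hγx₀⟩ := hex
      have heq : ∀ x ∈ {x | g⁻¹ * x ∈ U}, F x = f γ * φ ((γ : G)⁻¹ * x) := by
        intro x hx
        by_cases h : ∃ γ' : Γ, (γ' : G)⁻¹ * x ∈ U
        · obtain ⟨γ', hγ'⟩ := h
          have : γ' = γ := uniq g γ' γ x x₀ hx hx₀ hγ' hγx₀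
          rw [hFval x γ' hγ', this]
        · have h1 : F x = 0 := by simp only [hFdef]; rw [dif_neg h]
          have h2 : φ ((γ : G)⁻¹ * x) = 0 := hφ_zero _ (fun hc => h ⟨γ, hc⟩)
          rw [h1, h2, mul_zero]
      have hc : ContinuousAt (fun x => f γ * φ ((γ : G)⁻¹ * x)) g :=
        (continuous_const.mul (φ.continuous.comp (continuous_const.mul continuous_id))).continuousAt
      exact hc.congr (Filter.eventuallyEq_of_mem hnhds fun x hx => (heq x hx).symm)
    · have heq : ∀ x ∈ {x | g⁻¹ * x ∈ U}, F x = 0 := by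
        intro x hx
        have h : ¬ ∃ γ' : Γ, (γ' : G)⁻¹ * x ∈ U := fun ⟨γ', hγ'⟩ => hex ⟨γ', x, hx, hγ'⟩
        simp only [hFdef]; rw [dif_neg h]
      exact continuousAt_const.congr
        (Filter.eventuallyEq_of_mem hnhds fun x hx => (heq x hx).symm)
  -- bound
  have hFbd : ∀ g, ‖F g‖ ≤ ‖f‖ := by
    intro g
    by_cases h : ∃ γ : Γ, (γ : G)⁻¹ * g ∈ U
    · obtain ⟨γ, hγ⟩ := h
      rw [hFval g γ hγ]
      have h1 : ‖f γ * φ ((γ : G)⁻¹ * g)‖ = ‖f γ‖ * ‖φ ((γ : G)⁻¹ * g)‖ := norm_mul _ _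
      rw [h1]
      calc ‖f γ‖ * ‖φ ((γ : G)⁻¹ * g)‖ ≤ ‖f γ‖ * 1 := by
            apply mul_le_mul_of_nonneg_left _ (norm_nonneg _)
            rw [Real.norm_eq_abs, abs_of_nonneg (hφ_nonneg _)]
            exact hφ_le _
        _ = ‖f γ‖ := mul_one _
        _ ≤ ‖f‖ := f.norm_coe_le_norm γ
    · have h1 : F g = 0 := by simp only [hFdef]; rw [dif_neg h]
      rw [h1]; simp
  refine ⟨BoundedContinuousFunction.ofNormedAddCommGroup F hFcont ‖f‖ hFbd, ?_⟩
  ext γ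
  simp only [compContinuous_apply, ContinuousMap.coe_mk,
    BoundedContinuousFunction.coe_ofNormedAddCommGroup]
  have h1 : (γ : G)⁻¹ * (γ : G) ∈ U := by simpa using hU1
  rw [hFval _ γ h1]
  have : φ ((γ : G)⁻¹ * (γ : G)) = 1 := by
    have : (γ : G)⁻¹ * (γ : G) = 1 := inv_mul_cancel _
    rw [this]
    exact hφ1 rfl
  rw [this, mul_one]
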